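/- Four-times bound on convective spectral radius: under the setting where T is an m×n incidence matrix (each row exactly one +1 and one -1), F diagonal with Tᵀdiag(F) = 0, C := (1/2)Tᵀ F |T|, it holds that 4ρ(C) ≤ ρ(|T Tᵀ| |F|), i.e., the spectral radius of the skew-symmetric convective operator is bounded by one quarter of the spectral radius of the nonnegative matrix |T Tᵀ| |F|. -/

import Mathlib

open Matrix

/-- The spectral radius of a complex square matrix: supremum of the norms of its
eigenvalues. -/
noncomputable def specRad {n : ℕ} (M : Matrix (Fin n) (Fin n) ℂ) : ℝ :=
  sSup {r : ℝ | ∃ μ : ℂ, r = ‖μ‖ ∧ ∃ v : Fin n → ℂ, v ≠ 0 ∧ M.mulVec v = μ • v}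

/-- `T` is a cell-to-face incidence matrix: every row has exactly one `+1` and one `-1`
(in distinct columns) and zeros elsewhere. -/
def IsIncidence {m n : ℕ} (T : Matrix (Fin m) (Fin n) ℝ) : Prop :=
  ∀ j : Fin m, ∃ a b : Fin n, a ≠ b ∧ T j a = 1 ∧ T j b = -1 ∧
    ∀ c : Fin n, c ≠ a → c ≠ b → T j c = 0

section Aux

open Finset

lemma stmt13_sum_pair_support {n : ℕ} {a b : Fin n} (hab : a ≠ b) (g : Fin n → ℝ)
    (hg : ∀ c, c ≠ a → c ≠ b → g c = 0) : ∑ c, g c = g a + g b := by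
  have h := Finset.sum_subset (Finset.subset_univ ({a, b} : Finset (Fin n)))
    (fun x _ hx => by
      simp only [Finset.mem_insert, Finset.mem_singleton, not_or] at hx
      exact hg x hx.1 hx.2)
  rw [← h, Finset.sum_pair hab]

lemma stmt13_specSet_mem_le {k : ℕ} (Mc : Matrix (Fin k) (Fin k) ℂ) {r : ℝ}
    (hr : r ∈ {r : ℝ | ∃ μ : ℂ, r = ‖μ‖ ∧ ∃ v : Fin k → ℂ, v ≠ 0 ∧ Mc.mulVec v = μ • v}) :
    r ≤ ∑ i, ∑ j, ‖Mc i j‖ := by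
  obtain ⟨μ, rfl, v, hv0, hv⟩ := hr
  obtain ⟨i, hi⟩ := Function.ne_iff.mp hv0
  obtain ⟨i₀, -, hmax⟩ := Finset.exists_max_image Finset.univ (fun i => ‖v i‖) ⟨i, mem_univ i⟩
  have hvi₀ : 0 < ‖v i₀‖ := lt_of_lt_of_le (norm_pos_iff.mpr hi) (hmax i (mem_univ i))
  have h1 : ‖μ‖ * ‖v i₀‖ = ‖(Mc *ᵥ v) i₀‖ := by
    rw [hv]; simp [norm_mul]
  have h2 : ‖(Mc *ᵥ v) i₀‖ ≤ (∑ j, ‖Mc i₀ j‖) * ‖v i₀‖ := by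
    calc ‖(Mc *ᵥ v) i₀‖ ≤ ∑ j, ‖Mc i₀ j * v j‖ := by
          simp only [Matrix.mulVec, dotProduct]
          exact norm_sum_le _ _
      _ ≤ ∑ j, ‖Mc i₀ j‖ * ‖v i₀‖ := by
          refine Finset.sum_le_sum fun j _ => ?_
          rw [norm_mul]
          exact mul_le_mul_of_nonneg_left (hmax j (mem_univ j)) (norm_nonneg _)
      _ = (∑ j, ‖Mc i₀ j‖) * ‖v i₀‖ := by rw [Finset.sum_mul]
  have h3 : ‖μ‖ ≤ ∑ j, ‖Mc i₀ j‖ := by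
    have := h1.trans_le h2
    exact le_of_mul_le_mul_right this hvi₀
  refine h3.trans (Finset.single_le_sum (f := fun i => ∑ j, ‖Mc i j‖) ?_ (mem_univ i₀))
  intro i _
  exact Finset.sum_nonneg fun j _ => norm_nonneg _

lemma stmt13_specSet_bddAbove {k : ℕ} (Mc : Matrix (Fin k) (Fin k) ℂ) :
    BddAbove {r : ℝ | ∃ μ : ℂ, r = ‖μ‖ ∧ ∃ v : Fin k → ℂ, v ≠ 0 ∧ Mc.mulVec v = μ • v} :=
  ⟨_, fun _ hr => stmt13_specSet_mem_le Mc hr⟩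

lemma stmt13_specRad_nonneg {k : ℕ} (Mc : Matrix (Fin k) (Fin k) ℂ) : 0 ≤ specRad Mc := by
  cases k with
  | zero =>
    have : {r : ℝ | ∃ μ : ℂ, r = ‖μ‖ ∧ ∃ v : Fin 0 → ℂ, v ≠ 0 ∧ Mc.mulVec v = μ • v} = ∅ := by
      ext r
      simp only [Set.mem_setOf_eq, Set.mem_empty_iff_false, iff_false, not_exists]
      rintro μ ⟨-, v, hv0, -⟩
      exact (hv0 (funext fun i => i.elim0)).elim
    rw [specRad, this, Real.sSup_empty]
  | succ k =>
    obtain ⟨c, hc⟩ := Module.End.exists_eigenvalue (Matrix.toLin' Mc)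
    obtain ⟨v, hv⟩ := hc.exists_hasEigenvector
    have hmem : ‖c‖ ∈ {r : ℝ | ∃ μ : ℂ, r = ‖μ‖ ∧
        ∃ v : Fin (k+1) → ℂ, v ≠ 0 ∧ Mc.mulVec v = μ • v} :=
      ⟨c, rfl, v, hv.2, by simpa [Matrix.toLin'_apply] using hv.apply_eq_smul⟩
    exact le_trans (norm_nonneg c) (le_csSup (stmt13_specSet_bddAbove Mc) hmem)

lemma stmt13_rayleigh_bound {n : ℕ} [Nonempty (Fin n)] (M : Matrix (Fin n) (Fin n) ℝ)
    (hMH : M.IsHermitian) :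
    ∃ lam : ℝ, (∃ u : Fin n → ℝ, u ≠ 0 ∧ M *ᵥ u = lam • u) ∧
      ∀ w : Fin n → ℝ, ∑ a, ∑ b, w a * (M a b * w b) ≤ lam * ∑ a, w a * w a := by
  classical
  have i₀ : Fin n := Classical.arbitrary _
  haveI : Nontrivial (EuclideanSpace ℝ (Fin n)) :=
    nontrivial_of_ne (EuclideanSpace.single i₀ (1:ℝ)) 0 (by
      intro h
      have := congrArg (fun x => x i₀) h
      rw [EuclideanSpace.single_apply] at this
      simp at this)
  have hsym := Matrix.isHermitian_iff_isSymmetric.mp hMH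
  have hlam := hsym.hasEigenvalue_iSup_of_finiteDimensional
  set lam : ℝ := ⨆ x : {x : EuclideanSpace ℝ (Fin n) // x ≠ 0},
      RCLike.re (inner ℝ ((Matrix.toEuclideanLin M) (x:EuclideanSpace ℝ (Fin n)))
        (x:EuclideanSpace ℝ (Fin n)) : ℝ) / ‖(x:EuclideanSpace ℝ (Fin n))‖ ^ 2 with hlamdef
  refine ⟨lam, ?_, ?_⟩
  · obtain ⟨x, hx⟩ := hlam.exists_hasEigenvector
    refine ⟨WithLp.equiv 2 (Fin n → ℝ) x, ?_, ?_⟩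
    · intro h
      apply hx.2
      have := congrArg (WithLp.equiv 2 (Fin n → ℝ)).symm h
      simpa using this
    · have happ := hx.apply_eq_smul
      have := congrArg (WithLp.equiv 2 (Fin n → ℝ)) happ
      simpa using this
  · intro w
    rcases eq_or_ne w 0 with rfl | hw0
    · simp
    · set x : EuclideanSpace ℝ (Fin n) := (WithLp.equiv 2 (Fin n → ℝ)).symm w with hxdef
      have hx0 : x ≠ 0 := by
        intro h
        apply hw0
        have := congrArg (WithLp.equiv 2 (Fin n → ℝ)) h
        simpa [hxdef] using this
      have hinner : (inner ℝ ((Matrix.toEuclideanLin M) x) x : ℝ)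
          = ∑ a, ∑ b, w a * (M a b * w b) := by
        rw [Matrix.toEuclideanLin_apply]
        simp only [PiLp.inner_apply, RCLike.inner_apply, conj_trivial]
        refine Finset.sum_congr rfl fun a _ => ?_
        have h1 : ((WithLp.equiv 2 (Fin n → ℝ)).symm
            (M *ᵥ ((WithLp.equiv 2 (Fin n → ℝ)) x))) a = (M *ᵥ w) a := rfl
        have h2 : x a = w a := rfl
        rw [h2, show (M *ᵥ x.ofLp) a = (M *ᵥ w) a from rfl, Matrix.mulVec, dotProduct, Finset.mul_sum]
      have hnorm : ‖x‖ ^ 2 = ∑ a, w a * w a := by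
        rw [← real_inner_self_eq_norm_sq]
        simp only [PiLp.inner_apply, RCLike.inner_apply, conj_trivial]
        rfl
      have hWpos : 0 < ∑ a, w a * w a := by
        obtain ⟨i, hi⟩ := Function.ne_iff.mp hw0
        refine Finset.sum_pos' (fun i _ => mul_self_nonneg _) ⟨i, Finset.mem_univ i, ?_⟩
        simpa using mul_self_pos.mpr hi
      have hBdd : BddAbove (Set.range fun x : {x : EuclideanSpace ℝ (Fin n) // x ≠ 0} =>
          RCLike.re (inner ℝ ((Matrix.toEuclideanLin M) (x:EuclideanSpace ℝ (Fin n)))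
            (x:EuclideanSpace ℝ (Fin n)) : ℝ) / ‖(x:EuclideanSpace ℝ (Fin n))‖ ^ 2) := by
        refine ⟨‖LinearMap.toContinuousLinearMap (Matrix.toEuclideanLin M)‖, ?_⟩
        rintro y ⟨z, rfl⟩
        have hz2 : (0:ℝ) < ‖(z:EuclideanSpace ℝ (Fin n))‖ ^ 2 := by
          have : ‖(z:EuclideanSpace ℝ (Fin n))‖ ≠ 0 := norm_ne_zero_iff.mpr z.2
          positivity
        rw [div_le_iff₀ hz2]
        have h3 : (inner ℝ ((Matrix.toEuclideanLin M) (z:EuclideanSpace ℝ (Fin n)))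
            (z:EuclideanSpace ℝ (Fin n)) : ℝ)
            ≤ ‖(Matrix.toEuclideanLin M) (z:EuclideanSpace ℝ (Fin n))‖
              * ‖(z:EuclideanSpace ℝ (Fin n))‖ :=
          real_inner_le_norm _ _
        have h4 : ‖(Matrix.toEuclideanLin M) (z:EuclideanSpace ℝ (Fin n))‖
            ≤ ‖LinearMap.toContinuousLinearMap (Matrix.toEuclideanLin M)‖
              * ‖(z:EuclideanSpace ℝ (Fin n))‖ :=
          (LinearMap.toContinuousLinearMap (Matrix.toEuclideanLin M)).le_opNorm _
        simp only [RCLike.re_to_real]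
        nlinarith [norm_nonneg ((z:EuclideanSpace ℝ (Fin n)))]
      have hle := le_ciSup hBdd (⟨x, hx0⟩ : {x : EuclideanSpace ℝ (Fin n) // x ≠ 0})
      rw [← hlamdef] at hle
      simp only [RCLike.re_to_real] at hle
      rw [hinner, hnorm, div_le_iff₀ hWpos] at hle
      linarith [hle]

end Aux

/-- Four-times bound: for the skew-symmetric convective operator
`C = (1/2) Tᵀ F |T|` (with `Tᵀ diag F = 0`), `4 ρ(C) ≤ ρ(|T Tᵀ| |F|)`. -/
theorem stmt13 {m n : ℕ} (T : Matrix (Fin m) (Fin n) ℝ) (hT : IsIncidence T)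
    (f : Fin m → ℝ) (hf : Tᵀ.mulVec f = 0) :
    4 * specRad (((1 / 2 : ℝ) • (Tᵀ * Matrix.diagonal f * T.map (fun x => |x|))).map
        Complex.ofReal) ≤
      specRad (((T * Tᵀ).map (fun x => |x|) * Matrix.diagonal (fun j => |f j|)).map
        Complex.ofReal) := by
  classical
  open Finset in
  choose av bv hab h1 h2 h0 using hT
  have htri : ∀ j c, T j c = 1 ∨ T j c = -1 ∨ T j c = 0 := by
    intro j c
    rcases eq_or_ne c (av j) with h | h
    · exact Or.inl (h ▸ h1 j)
    rcases eq_or_ne c (bv j) with h' | h'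
    · exact Or.inr (Or.inl (h' ▸ h2 j))
    · exact Or.inr (Or.inr (h0 j c h h'))
  have hone : ∀ j c, T j c = 1 → c = av j := by
    intro j c h
    by_contra hc
    rcases eq_or_ne c (bv j) with h' | h'
    · rw [h', h2 j] at h; norm_num at h
    · rw [h0 j c hc h'] at h; norm_num at h
  have hneg : ∀ j c, T j c = -1 → c = bv j := by
    intro j c h
    by_contra hc
    rcases eq_or_ne c (av j) with h' | h'
    · rw [h', h1 j] at h; norm_num at h
    · rw [h0 j c h' hc] at h; norm_num at h
  have hSum : ∀ (j : Fin m) (u : Fin n → ℝ),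
      ∑ c, |T j c| * u c = u (av j) + u (bv j) := by
    intro j u
    rw [stmt13_sum_pair_support (hab j) _ (fun c hca hcb => by rw [h0 j c hca hcb]; simp)]
    rw [h1 j, h2 j]; norm_num
  have habsTT : (T * Tᵀ).map (fun x => |x|)
      = T.map (fun x => |x|) * (T.map (fun x => |x|))ᵀ := by
    ext j k
    simp only [Matrix.map_apply, Matrix.mul_apply, Matrix.transpose_apply]
    have hL : ∑ c, T j c * T k c = T k (av j) - T k (bv j) := by
      rw [stmt13_sum_pair_support (hab j) _ (fun c hca hcb => by rw [h0 j c hca hcb]; ring)]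
      rw [h1 j, h2 j]; ring
    have hR : ∑ c, |T j c| * |T k c| = |T k (av j)| + |T k (bv j)| := by
      rw [hSum j (fun c => |T k c|)]
    rw [hL, hR]
    have hx := htri k (av j)
    have hy := htri k (bv j)
    have hno1 : ¬ (T k (av j) = 1 ∧ T k (bv j) = 1) := by
      rintro ⟨ha, hb⟩
      exact (hab j) ((hone k _ ha).trans (hone k _ hb).symm)
    have hno2 : ¬ (T k (av j) = -1 ∧ T k (bv j) = -1) := by
      rintro ⟨ha, hb⟩
      exact (hab j) ((hneg k _ ha).trans (hneg k _ hb).symm)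
    rcases hx with hx | hx | hx <;> rcases hy with hy | hy | hy <;>
      simp [hx, hy] at hno1 hno2 ⊢ <;> norm_num
  -- abbreviations
  set S := T.map (fun x => |x|) with hSdef
  set Dg := Matrix.diagonal (fun j => |f j|) with hDgdef
  set M := Sᵀ * Dg * S with hMdef
  set G := Tᵀ * Matrix.diagonal f * S with hGdef
  have hSa : ∀ j c, S j c = |T j c| := fun j c => rfl
  have hM : ∀ a b, M a b = ∑ j, |f j| * (|T j a| * |T j b|) := by
    intro a b
    rw [hMdef, Matrix.mul_apply]
    refine Finset.sum_congr rfl fun j _ => ?_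
    rw [Matrix.mul_diagonal, Matrix.transpose_apply, hSa, hSa]
    ring
  have hG : ∀ a b, G a b = ∑ j, T j a * f j * |T j b| := by
    intro a b
    rw [hGdef, Matrix.mul_apply]
    refine Finset.sum_congr rfl fun j _ => ?_
    rw [Matrix.mul_diagonal, Matrix.transpose_apply, hSa]
  have hGdiag : ∀ a, G a a = 0 := by
    intro a
    rw [hG]
    have hterm : ∀ j : Fin m, T j a * f j * |T j a| = T j a * f j := by
      intro j
      rcases htri j a with h | h | h <;> rw [h] <;> norm_num
    rw [Finset.sum_congr rfl fun j _ => hterm j]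
    have := congrFun hf a
    simpa [Matrix.mulVec, dotProduct, Matrix.transpose_apply] using this
  have hGabs : ∀ a b, |G a b| ≤ M a b := by
    intro a b
    rw [hG, hM]
    refine (Finset.abs_sum_le_sum_abs _ _).trans
      (le_of_eq (Finset.sum_congr rfl fun j _ => ?_))
    rw [abs_mul, abs_mul, abs_abs]
    ring
  have hMH : M.IsHermitian := by
    show Mᴴ = M
    ext i j
    rw [Matrix.conjTranspose_apply, star_trivial, hM, hM]
    exact Finset.sum_congr rfl fun k _ => by ring
  -- the right-hand side spectral radius
  set ρ := specRad (((T * Tᵀ).map (fun x => |x|) * Dg).map Complex.ofReal) with hρdef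
  have hρ0 : 0 ≤ ρ := stmt13_specRad_nonneg _
  have hBddR := stmt13_specSet_bddAbove (((T * Tᵀ).map (fun x => |x|) * Dg).map Complex.ofReal)
  have hmain : ∀ r ∈ {r : ℝ | ∃ μ : ℂ, r = ‖μ‖ ∧ ∃ v : Fin n → ℂ, v ≠ 0 ∧
      (((1 / 2 : ℝ) • G).map Complex.ofReal).mulVec v = μ • v}, r ≤ ρ / 4 := by
    rintro r ⟨μ, rfl, v, hv0, hv⟩
    obtain ⟨i₀, hi₀⟩ := Function.ne_iff.mp hv0
    haveI : Nonempty (Fin n) := ⟨i₀⟩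
    set Gc := G.map Complex.ofReal with hGcdef
    have hhalf : ((1 / 2 : ℝ) • G).map Complex.ofReal = (1/2 : ℂ) • Gc := by
      ext i j
      simp only [Matrix.map_apply, Matrix.smul_apply, smul_eq_mul, hGcdef]
      push_cast
      ring
    have hv2 : Gc *ᵥ v = (2 * μ) • v := by
      rw [hhalf, Matrix.smul_mulVec] at hv
      calc Gc *ᵥ v = (2:ℂ) • ((1/2:ℂ) • (Gc *ᵥ v)) := by rw [smul_smul]; norm_num
        _ = (2:ℂ) • (μ • v) := by rw [hv]
        _ = (2 * μ) • v := by rw [smul_smul]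
    set w : Fin n → ℝ := fun a => ‖v a‖ with hwdef
    have hw0 : w ≠ 0 := Function.ne_iff.mpr ⟨i₀, by simpa [hwdef] using norm_ne_zero_iff.mpr hi₀⟩
    set W := ∑ a, w a * w a with hWdef
    have hW0 : 0 < W := by
      refine Finset.sum_pos' (fun i _ => mul_self_nonneg _) ⟨i₀, Finset.mem_univ i₀, ?_⟩
      exact mul_self_pos.mpr (norm_ne_zero_iff.mpr hi₀)
    have hkey : ∀ a, ‖2 * μ‖ * w a ≤ ∑ b, (if a = b then (0:ℝ) else M a b) * w b := by
      intro a
      have hcomp : (Gc *ᵥ v) a = (2 * μ) * v a := by rw [hv2]; rfl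
      have hGcv : (Gc *ᵥ v) a = ∑ b, (G a b : ℂ) * v b := rfl
      have hnorm : ‖2 * μ‖ * w a = ‖∑ b, (G a b : ℂ) * v b‖ := by
        rw [← hGcv, hcomp, norm_mul (2 * μ) (v a)]
      rw [hnorm]
      calc ‖∑ b, (G a b : ℂ) * v b‖ ≤ ∑ b, ‖(G a b : ℂ) * v b‖ := norm_sum_le _ _
        _ = ∑ b, |G a b| * w b := by
            refine Finset.sum_congr rfl fun b _ => ?_
            rw [norm_mul, Complex.norm_real, Real.norm_eq_abs]
        _ ≤ ∑ b, (if a = b then (0:ℝ) else M a b) * w b := by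
            refine Finset.sum_le_sum fun b _ => ?_
            by_cases hb : a = b
            · subst hb
              rw [if_pos rfl, hGdiag a]
              simp
            · rw [if_neg hb]
              exact mul_le_mul_of_nonneg_right (hGabs a b) (norm_nonneg _)
    have hsum1 : ‖2 * μ‖ * W ≤ ∑ a, ∑ b, w a * ((if a = b then (0:ℝ) else M a b) * w b) := by
      rw [show ‖2 * μ‖ * W = ∑ a, w a * (‖2 * μ‖ * w a) by
        rw [hWdef, Finset.mul_sum]; exact Finset.sum_congr rfl fun a _ => by ring]
      refine Finset.sum_le_sum fun a _ => ?_
      rw [← Finset.mul_sum]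
      exact mul_le_mul_of_nonneg_left (hkey a) (norm_nonneg _)
    have hsplit : ∑ a, ∑ b, w a * ((if a = b then (0:ℝ) else M a b) * w b)
        = (∑ a, ∑ b, w a * (M a b * w b)) - ∑ a, w a * (M a a * w a) := by
      rw [← Finset.sum_sub_distrib]
      refine Finset.sum_congr rfl fun a _ => ?_
      have hterm : ∀ b, w a * ((if a = b then (0:ℝ) else M a b) * w b)
          = w a * (M a b * w b) - (if b = a then w a * (M a b * w b) else 0) := by
        intro b
        by_cases hb : b = a
        · subst hb; simp
        · rw [if_neg hb, if_neg (fun h => hb h.symm)]; ring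
      rw [Finset.sum_congr rfl fun b _ => hterm b, Finset.sum_sub_distrib,
        Finset.sum_ite_eq' Finset.univ a (fun b => w a * (M a b * w b))]
      simp
    have hQM : ∑ a, ∑ b, w a * (M a b * w b)
        = ∑ j, |f j| * ((w (av j) + w (bv j)) * (w (av j) + w (bv j))) := by
      calc ∑ a, ∑ b, w a * (M a b * w b)
          = ∑ a, ∑ j, ∑ b, |f j| * ((|T j a| * w a) * (|T j b| * w b)) := by
            refine Finset.sum_congr rfl fun a _ => ?_
            rw [Finset.sum_comm]
            refine Finset.sum_congr rfl fun b _ => ?_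
            rw [hM, Finset.sum_mul, Finset.mul_sum]
            exact Finset.sum_congr rfl fun j _ => by ring
        _ = ∑ j, ∑ a, ∑ b, |f j| * ((|T j a| * w a) * (|T j b| * w b)) := Finset.sum_comm
        _ = ∑ j, |f j| * ((∑ a, |T j a| * w a) * (∑ b, |T j b| * w b)) := by
            refine Finset.sum_congr rfl fun j _ => ?_
            rw [Finset.sum_mul_sum, Finset.mul_sum]
            refine Finset.sum_congr rfl fun a _ => ?_
            rw [Finset.mul_sum]
        _ = ∑ j, |f j| * ((w (av j) + w (bv j)) * (w (av j) + w (bv j))) := by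
            refine Finset.sum_congr rfl fun j _ => ?_
            rw [hSum j w]
    have hDS : ∑ a, w a * (M a a * w a)
        = ∑ j, |f j| * (w (av j) * w (av j) + w (bv j) * w (bv j)) := by
      calc ∑ a, w a * (M a a * w a)
          = ∑ a, ∑ j, |f j| * (|T j a| * (|T j a| * (w a * w a))) := by
            refine Finset.sum_congr rfl fun a _ => ?_
            rw [hM, Finset.sum_mul, Finset.mul_sum]
            exact Finset.sum_congr rfl fun j _ => by ring
        _ = ∑ j, ∑ a, |f j| * (|T j a| * (|T j a| * (w a * w a))) := Finset.sum_comm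
        _ = ∑ j, |f j| * (w (av j) * w (av j) + w (bv j) * w (bv j)) := by
            refine Finset.sum_congr rfl fun j _ => ?_
            rw [← Finset.mul_sum]
            have := hSum j (fun c => |T j c| * (w c * w c))
            rw [show (∑ a, |T j a| * (|T j a| * (w a * w a)))
                = ∑ c, |T j c| * (|T j c| * (w c * w c)) from rfl, this, h1 j, h2 j]
            norm_num
    have hQMle : ∑ a, ∑ b, w a * (M a b * w b) ≤ 2 * ∑ a, w a * (M a a * w a) := by
      rw [hQM, hDS, Finset.mul_sum]
      refine Finset.sum_le_sum fun j _ => ?_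
      have hfj := abs_nonneg (f j)
      nlinarith [sq_nonneg (w (av j) - w (bv j))]
    obtain ⟨lam, ⟨u, hu0, hu⟩, hray⟩ := stmt13_rayleigh_bound M hMH
    have hQMray := hray w
    have hn2 : ‖2 * μ‖ = 2 * ‖μ‖ := by rw [norm_mul]; norm_num
    have h4W : 4 * ‖μ‖ * W ≤ lam * W := by
      rw [hn2] at hsum1
      rw [← hWdef] at hQMray
      linarith
    have h5 : 4 * ‖μ‖ ≤ lam := le_of_mul_le_mul_right (by linarith) hW0
    rcases le_or_gt lam 0 with hlam0 | hlampos
    · have hμ0 : ‖μ‖ = 0 := le_antisymm (by linarith) (norm_nonneg _)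
      rw [hμ0]
      linarith
    · -- transfer the eigenvalue lam of M to an eigenvalue of |T Tᵀ| |F|
      set z := S *ᵥ u with hzdef
      have hz : ((T * Tᵀ).map (fun x => |x|) * Dg) *ᵥ z = lam • z := by
        rw [habsTT]
        calc (S * Sᵀ * Dg) *ᵥ (S *ᵥ u) = ((S * Sᵀ * Dg) * S) *ᵥ u := Matrix.mulVec_mulVec ..
          _ = (S * (Sᵀ * Dg * S)) *ᵥ u := by
              rw [show (S * Sᵀ * Dg) * S = S * (Sᵀ * Dg * S) by
                simp only [Matrix.mul_assoc]]
          _ = S *ᵥ (M *ᵥ u) := (Matrix.mulVec_mulVec ..).symm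
          _ = S *ᵥ (lam • u) := by rw [hu]
          _ = lam • (S *ᵥ u) := by rw [Matrix.mulVec_smul]
      have hz0 : z ≠ 0 := by
        intro h
        have h6 : (Sᵀ * Dg) *ᵥ z = lam • u := by
          rw [hzdef, Matrix.mulVec_mulVec, ← hMdef]
          exact hu
        rw [h, Matrix.mulVec_zero] at h6
        have := (smul_eq_zero.mp h6.symm).resolve_left (ne_of_gt hlampos)
        exact hu0 this
      obtain ⟨i₁, hi₁⟩ := Function.ne_iff.mp hz0
      have hmem : lam ∈ {r : ℝ | ∃ μ : ℂ, r = ‖μ‖ ∧ ∃ vv : Fin m → ℂ, vv ≠ 0 ∧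
          ((((T * Tᵀ).map (fun x => |x|) * Dg).map Complex.ofReal)).mulVec vv = μ • vv} := by
        refine ⟨(lam : ℂ), ?_, (fun i => (z i : ℂ)), ?_, ?_⟩
        · rw [Complex.norm_real, Real.norm_eq_abs, abs_of_pos hlampos]
        · exact Function.ne_iff.mpr ⟨i₁, by simpa using Complex.ofReal_ne_zero.mpr hi₁⟩
        · funext i
          have h7 : (((T * Tᵀ).map (fun x => |x|) * Dg) *ᵥ z) i = lam * z i := by
            rw [hz]; rfl
          have h8 : ((((T * Tᵀ).map (fun x => |x|) * Dg).map Complex.ofReal)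
              *ᵥ (fun i => (z i : ℂ))) i
              = ((((T * Tᵀ).map (fun x => |x|) * Dg) *ᵥ z) i : ℂ) := by
            simp only [Matrix.mulVec, dotProduct, Matrix.map_apply]
            push_cast
            rfl
          rw [h8, h7]
          push_cast
          simp [smul_eq_mul]
      have hlamρ : lam ≤ ρ := le_csSup hBddR hmem
      linarith
  have hL : specRad (((1 / 2 : ℝ) • G).map Complex.ofReal) ≤ ρ / 4 :=
    Real.sSup_le hmain (by linarith)
  linarith
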